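/- arXiv:1512.01018 — 4 statements merged into one kernel-verified Lean document; each statement's English description precedes it below -/
import Mathlib

section
/- Let L be a finite-dimensional Lie algebra over a field F, let A be a quasi-minimal ideal of L and let B be an ideal of L. Then either A ⊆ B or A ⊆ C_L(B). -/
namespace Paper

open LieAlgebra

section AlgDefs

variable (F : Type*) [Field F] (L : Type*) [LieRing L] [LieAlgebra F L]

/-- The nilradical of a Lie algebra: the largest nilpotent ideal (the sup of nilpotent ideals). -/
noncomputable def nilrad : LieIdeal F L :=
  sSup {I : LieIdeal F L | LieModule.IsNilpotent I I}

/-- The nilpotency class of a Lie algebra. -/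
noncomputable def nilClass : ℕ := sInf {k | LieModule.lowerCentralSeries F L L k = ⊥}

/-- A Lie algebra is nilregular if the field has characteristic zero, or characteristic `p > 0`
and its nilradical has nilpotency class less than `p - 1`. -/
noncomputable def Nilregular : Prop :=
  ringChar F = 0 ∨ nilClass F (nilrad F L) < ringChar F - 1

/-- A Lie algebra is solregular if the field has characteristic zero, or characteristic `p > 0`
and its radical has derived length less than `log₂ p`. -/
noncomputable def Solregular : Prop :=
  ringChar F = 0 ∨ 2 ^ LieAlgebra.derivedLength F (LieAlgebra.radical F L) < ringChar F

/-- Regular means nilregular or solregular. -/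
noncomputable def Regular : Prop := Nilregular F L ∨ Solregular F L

end AlgDefs

section IdealDefs

variable {F : Type*} [Field F] {L : Type*} [LieRing L] [LieAlgebra F L]

/-- The centraliser `C_L(I)` of an ideal `I`, as an ideal of `L`. -/
def centralizer (I : LieIdeal F L) : LieIdeal F L where
  carrier := {x : L | ∀ y ∈ I, ⁅x, y⁆ = 0}
  zero_mem' := by intro y hy; simp
  add_mem' := by intro a b ha hb y hy; rw [add_lie, ha y hy, hb y hy, add_zero]
  smul_mem' := by intro c x hx y hy; rw [smul_lie, hx y hy, smul_zero]
  lie_mem := by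
    intro x m hm y hy
    have h1 : ⁅x, ⁅m, y⁆⁆ = (0 : L) := by rw [hm y hy, lie_zero]
    have h2 : ⁅m, ⁅x, y⁆⁆ = (0 : L) := hm _ (I.lie_mem hy)
    show ⁅⁅x, m⁆, y⁆ = (0 : L)
    rw [lie_lie, h1, h2, sub_zero]

/-- The centre `Z(I)` of an ideal `I`, as an ideal of `L`. -/
def idealCenter (I : LieIdeal F L) : LieIdeal F L where
  carrier := {x : L | x ∈ I ∧ ∀ y ∈ I, ⁅x, y⁆ = 0}
  zero_mem' := ⟨I.zero_mem, by intro y hy; simp⟩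
  add_mem' := by
    intro a b ha hb
    exact ⟨I.add_mem ha.1 hb.1, fun y hy => by rw [add_lie, ha.2 y hy, hb.2 y hy, add_zero]⟩
  smul_mem' := by
    intro c x hx
    exact ⟨I.smul_mem c hx.1, fun y hy => by rw [smul_lie, hx.2 y hy, smul_zero]⟩
  lie_mem := by
    intro x m hm
    refine ⟨I.lie_mem hm.1, fun y hy => ?_⟩
    have h1 : ⁅x, ⁅m, y⁆⁆ = (0 : L) := by rw [hm.2 y hy, lie_zero]
    have h2 : ⁅m, ⁅x, y⁆⁆ = (0 : L) := hm.2 _ (I.lie_mem hy)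
    show ⁅⁅x, m⁆, y⁆ = (0 : L)
    rw [lie_lie, h1, h2, sub_zero]

/-- The centraliser `C_L(A/B)` of a chief factor, as an ideal of `L`. -/
def chiefCentralizer (A B : LieIdeal F L) : LieIdeal F L where
  carrier := {x : L | ∀ a ∈ A, ⁅x, a⁆ ∈ B}
  zero_mem' := by intro a ha; simp [B.zero_mem]
  add_mem' := by intro x y hx hy a ha; rw [add_lie]; exact B.add_mem (hx a ha) (hy a ha)
  smul_mem' := by intro c x hx a ha; rw [smul_lie]; exact B.smul_mem c (hx a ha)
  lie_mem := by
    intro x m hm a ha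
    show ⁅⁅x, m⁆, a⁆ ∈ B
    rw [lie_lie]
    exact B.sub_mem (B.lie_mem (hm a ha)) (hm _ (A.lie_mem ha))

/-- `A/Z` is a minimal ideal of `L/Z` (via the ideal correspondence). -/
def IsMinModIdeal (Z A : LieIdeal F L) : Prop :=
  Z < A ∧ ∀ B : LieIdeal F L, Z ≤ B → B ≤ A → B = Z ∨ B = A

/-- `A` is a minimal ideal of `L`. -/
def IsMinimalIdeal (A : LieIdeal F L) : Prop := IsMinModIdeal ⊥ A

/-- An ideal `A` of `L` is quasi-minimal if `A² = A` and `A/Z(A)` is a minimal ideal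
of `L/Z(A)`. -/
def IsQuasiMinimal (A : LieIdeal F L) : Prop :=
  ⁅A, A⁆ = A ∧ IsMinModIdeal (idealCenter A) A

end IdealDefs

section MoreDefs

variable (F : Type*) [Field F] (L : Type*) [LieRing L] [LieAlgebra F L]

/-- `E†(L)`: the subalgebra generated by the quasi-minimal components of `L`. -/
noncomputable def Edagger : LieSubalgebra F L :=
  LieSubalgebra.lieSpan F L (⋃ A ∈ {A : LieIdeal F L | IsQuasiMinimal A}, (A : Set L))

/-- `N†(L) = N(L) + E†(L)`: the quasi-minimal radical of `L`. -/
noncomputable def Ndagger : LieSubalgebra F L :=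
  LieIdeal.toLieSubalgebra F L (nilrad F L) ⊔ Edagger F L

/-- The generalised nilradical `N*(L)`: the ideal containing `N = N(L)` with
`N*(L)/N` the sum of all minimal ideals of `L/N` contained in `(N + C_L(N))/N`. -/
noncomputable def Nstar : LieIdeal F L :=
  nilrad F L ⊔ sSup {A : LieIdeal F L | IsMinModIdeal (nilrad F L) A ∧
    A ≤ nilrad F L ⊔ centralizer (nilrad F L)}

/-- The Frattini ideal: the largest ideal contained in every maximal subalgebra. -/
def frattini : LieIdeal F L :=
  sSup {I : LieIdeal F L | ∀ M : LieSubalgebra F L, IsCoatom M → (I : Set L) ⊆ M}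

/-- `Ñ(L)`: the ideal with `Ñ(L)/φ(L) = Soc (L/φ(L))`. -/
noncomputable def Ntilde : LieIdeal F L :=
  frattini F L ⊔ sSup {A : LieIdeal F L | IsMinModIdeal (frattini F L) A}

/-- A characteristic ideal: one invariant under all derivations. -/
def IsCharIdeal (J : LieIdeal F L) : Prop :=
  ∀ D : LieDerivation F L L, ∀ x ∈ J, D x ∈ J

/-- The characteristic radical `R_c(L)`: the sum of all solvable characteristic ideals. -/
noncomputable def charRadical : LieIdeal F L :=
  sSup {J : LieIdeal F L | LieAlgebra.IsSolvable J ∧ IsCharIdeal F L J}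

/-- A subideal: a subalgebra joined to `L` by a chain of successive ideals. -/
def IsSubideal (S : LieSubalgebra F L) : Prop :=
  ∃ n : ℕ, ∃ c : Fin (n + 1) → LieSubalgebra F L,
    c 0 = S ∧ c (Fin.last n) = ⊤ ∧
    ∀ i : Fin n, c i.castSucc ≤ c i.succ ∧
      ∀ x ∈ c i.succ, ∀ y ∈ c i.castSucc, ⁅x, y⁆ ∈ c i.castSucc

end MoreDefs

/-- If `A` is quasi-minimal and `B` is an ideal then `A ⊆ B` or `A ⊆ C_L(B)`. -/
theorem stmt_9 (F : Type*) [Field F] (L : Type*) [LieRing L] [LieAlgebra F L]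
    [FiniteDimensional F L] (A B : LieIdeal F L) (hA : IsQuasiMinimal A) :
    A ≤ B ∨ A ≤ centralizer B := by
  obtain ⟨hsq, hZA, hmin⟩ := hA
  set Z := idealCenter A with hZ
  have hZleA : Z ≤ A := fun x hx => hx.1
  have hZcen : ∀ z ∈ Z, ∀ w ∈ A, ⁅z, w⁆ = (0 : L) := fun z hz => hz.2
  have hC1 : Z ≤ Z ⊔ (A ⊓ B) := le_sup_left
  have hC2 : Z ⊔ (A ⊓ B) ≤ A := sup_le hZleA inf_le_left
  rcases hmin (Z ⊔ (A ⊓ B)) hC1 hC2 with hC | hC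
  · -- A ∩ B ≤ Z : then A = ⁅A,A⁆ centralizes B
    have hAB : A ⊓ B ≤ Z := le_sup_right.trans hC.le
    right
    rw [← hsq]
    rw [LieSubmodule.lieIdeal_oper_eq_span, LieSubmodule.lieSpan_le]
    rintro _ ⟨x, y, rfl⟩
    intro b hb
    have hybA : ⁅(y : L), b⁆ ∈ A := by
      rw [← lie_skew]; exact A.neg_mem (A.lie_mem y.2)
    have hxbA : ⁅(x : L), b⁆ ∈ A := by
      rw [← lie_skew]; exact A.neg_mem (A.lie_mem x.2)
    have hyb : ⁅(y : L), b⁆ ∈ Z := hAB ⟨hybA, B.lie_mem hb⟩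
    have hxb : ⁅(x : L), b⁆ ∈ Z := hAB ⟨hxbA, B.lie_mem hb⟩
    have h1 : ⁅(x : L), ⁅(y : L), b⁆⁆ = 0 := by
      rw [← lie_skew, hZcen _ hyb _ x.2, neg_zero]
    have h2 : ⁅(y : L), ⁅(x : L), b⁆⁆ = 0 := by
      rw [← lie_skew, hZcen _ hxb _ y.2, neg_zero]
    show ⁅⁅(x : L), (y : L)⁆, b⁆ = 0
    rw [lie_lie, h1, h2, sub_zero]
  · -- Z ⊔ (A ∩ B) = A : then A = ⁅A,A⁆ ≤ B
    left
    rw [← hsq]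
    rw [LieSubmodule.lieIdeal_oper_eq_span, LieSubmodule.lieSpan_le]
    rintro _ ⟨x, y, rfl⟩
    have hx : (x : L) ∈ Z ⊔ (A ⊓ B) := hC.ge x.2
    have hy : (y : L) ∈ Z ⊔ (A ⊓ B) := hC.ge y.2
    rw [LieSubmodule.mem_sup] at hx hy
    obtain ⟨z1, hz1, w1, hw1, hx⟩ := hx
    obtain ⟨z2, hz2, w2, hw2, hy⟩ := hy
    have : ⁅(x : L), (y : L)⁆ = ⁅w1, w2⁆ := by
      rw [← hx, ← hy, add_lie, lie_add, lie_add,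
        hZcen _ hz1 _ (hZleA hz2), hZcen _ hz1 _ hw2.1]
      rw [show ⁅w1, z2⁆ = 0 by rw [← lie_skew, hZcen _ hz2 _ hw1.1, neg_zero]]
      simp
    show ⁅(x : L), (y : L)⁆ ∈ B
    rw [this]
    exact B.lie_mem hw2.2

end Paper
end

section
/- Let L be a finite-dimensional Lie algebra over a field F with radical R = R(L). Then distinct quasi-minimal components of L commute: E†(L) is the sum of the quasi-minimal components of L, and for any two distinct quasi-minimal components P, Q one has [P,Q] = 0 and P ∩ Q ⊆ Z(R). -/
namespace Paper

open LieAlgebra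

section Aux

variable {F : Type*} [Field F] {L : Type*} [LieRing L] [LieAlgebra F L]

lemma mem_idealCenter_iff {P : LieIdeal F L} {x : L} :
    x ∈ idealCenter P ↔ x ∈ P ∧ ∀ y ∈ P, ⁅x, y⁆ = 0 := Iff.rfl

lemma mem_centralizer_iff {P : LieIdeal F L} {x : L} :
    x ∈ centralizer P ↔ ∀ y ∈ P, ⁅x, y⁆ = 0 := Iff.rfl

lemma idealCenter_le (P : LieIdeal F L) : idealCenter P ≤ P := fun _ h => h.1

lemma mem_of_lie_left {P : LieIdeal F L} {x y : L} (hx : x ∈ P) : ⁅x, y⁆ ∈ P := by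
  rw [← lie_skew]; exact neg_mem (P.lie_mem hx)

lemma qm_dichotomy {P C : LieIdeal F L} (hP : IsQuasiMinimal P) (hC : C ≤ P) :
    C ≤ idealCenter P ∨ P ≤ C := by
  have hZ : idealCenter P ≤ P := idealCenter_le P
  rcases hP.2.2 (idealCenter P ⊔ C) le_sup_left (sup_le hZ hC) with h | h
  · left; exact le_trans le_sup_right h.le
  · right
    have hBC : ⁅idealCenter P ⊔ C, idealCenter P ⊔ C⁆ ≤ C := by
      rw [LieSubmodule.lie_le_iff]
      intro x hx m hm
      rw [LieSubmodule.mem_sup] at hx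
      obtain ⟨y, hy, z, hz, rfl⟩ := hx
      have hmP : m ∈ P := (sup_le hZ hC) hm
      rw [add_lie, hy.2 m hmP, zero_add]
      exact mem_of_lie_left hz
    calc P = ⁅P, P⁆ := hP.1.symm
    _ = ⁅idealCenter P ⊔ C, idealCenter P ⊔ C⁆ := by rw [h]
    _ ≤ C := hBC

lemma qm_ne_bot {P : LieIdeal F L} (hP : IsQuasiMinimal P) : P ≠ ⊥ := by
  intro h
  exact (h ▸ hP.2.1).not_ge bot_le

lemma inf_le_idealCenter {P Q : LieIdeal F L} (hP : IsQuasiMinimal P) (hQ : IsQuasiMinimal Q)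
    (hne : P ≠ Q) : P ⊓ Q ≤ idealCenter P := by
  rcases qm_dichotomy hP inf_le_left with h | h
  · exact h
  · have hPQ : P ≤ Q := le_trans h inf_le_right
    rcases qm_dichotomy hQ (inf_le_right (a := P)) with h2 | h2
    · have hPZ : P ≤ idealCenter Q := le_trans (le_inf le_rfl hPQ) h2
      have hbot : ⁅P, P⁆ = ⊥ := by
        rw [LieSubmodule.lie_eq_bot_iff]
        intro x hx m hm
        exact (hPZ hx).2 m (hPQ hm)
      exact absurd (hP.1.symm.trans hbot) (qm_ne_bot hP)
    · exact absurd (le_antisymm hPQ (le_trans h2 inf_le_left)) hne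

lemma idealCenter_le_radical (P : LieIdeal F L) :
    idealCenter P ≤ LieAlgebra.radical F L := by
  have habel : IsLieAbelian (idealCenter P) := by
    constructor
    intro x y
    have hx := x.2.2 (y : L) y.2.1
    exact Subtype.ext (by simpa using hx)
  exact le_sSup (LieAlgebra.ofAbelianIsSolvable (L := idealCenter P))

lemma qm_center_eq [FiniteDimensional F L] {P : LieIdeal F L} (hP : IsQuasiMinimal P) :
    idealCenter P = P ⊓ LieAlgebra.radical F L := by
  refine le_antisymm (le_inf (idealCenter_le P) (idealCenter_le_radical P)) ?_
  rcases qm_dichotomy hP inf_le_left with h | h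
  · exact h
  · exfalso
    have hPrad : P ≤ LieAlgebra.radical F L := le_trans h inf_le_right
    have hsolv : LieAlgebra.IsSolvable P :=
      LieAlgebra.le_solvable_ideal_solvable hPrad inferInstance
    obtain ⟨k, hk⟩ := LieAlgebra.IsSolvable.solvable F P
    rw [LieIdeal.derivedSeries_eq_bot_iff] at hk
    have hconst : ∀ n, LieAlgebra.derivedSeriesOfIdeal F L n P = P := by
      intro n; induction n with
      | zero => exact LieAlgebra.derivedSeriesOfIdeal_zero F L P
      | succ n ih => rw [LieAlgebra.derivedSeriesOfIdeal_succ, ih, hP.1]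
    exact qm_ne_bot hP ((hconst k) ▸ hk)

lemma qm_centralizes_radical [FiniteDimensional F L] {P : LieIdeal F L}
    (hP : IsQuasiMinimal P) : ∀ x ∈ P, ∀ r ∈ LieAlgebra.radical F L, ⁅x, r⁆ = 0 := by
  have key : ∀ p ∈ P, ∀ r ∈ LieAlgebra.radical F L, ⁅p, r⁆ ∈ idealCenter P := by
    intro p hp r hr
    rw [qm_center_eq hP]
    exact ⟨mem_of_lie_left hp, (LieAlgebra.radical F L).lie_mem hr⟩
  have hle : P ≤ centralizer (LieAlgebra.radical F L) := by
    conv_lhs => rw [← hP.1]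
    rw [LieSubmodule.lie_le_iff]
    intro p1 hp1 p2 hp2
    rw [mem_centralizer_iff]
    intro r hr
    have h1 := key p2 hp2 r hr
    have h2 := key p1 hp1 r hr
    have e1 : ⁅p1, ⁅p2, r⁆⁆ = 0 := by rw [← lie_skew, h1.2 p1 hp1, neg_zero]
    have e2 : ⁅p2, ⁅p1, r⁆⁆ = 0 := by rw [← lie_skew, h2.2 p2 hp2, neg_zero]
    rw [lie_lie, e1, e2, sub_zero]
  intro x hx r hr
  exact hle hx r hr

lemma qm_commute [FiniteDimensional F L] {P Q : LieIdeal F L} (hP : IsQuasiMinimal P)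
    (hQ : IsQuasiMinimal Q) (hne : P ≠ Q) : ⁅P, Q⁆ = (⊥ : LieIdeal F L) := by
  have hQP : Q ≤ centralizer P := by
    conv_lhs => rw [← hQ.1]
    rw [LieSubmodule.lie_le_iff]
    intro q1 hq1 q2 hq2
    rw [mem_centralizer_iff]
    intro p hp
    have h1 : ⁅q2, p⁆ ∈ idealCenter Q := by
      apply inf_le_idealCenter hQ hP hne.symm
      exact ⟨mem_of_lie_left hq2, P.lie_mem hp⟩
    have h2 : ⁅q1, p⁆ ∈ idealCenter Q := by
      apply inf_le_idealCenter hQ hP hne.symm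
      exact ⟨mem_of_lie_left hq1, P.lie_mem hp⟩
    have e1 : ⁅q1, ⁅q2, p⁆⁆ = 0 := by rw [← lie_skew, h1.2 q1 hq1, neg_zero]
    have e2 : ⁅q2, ⁅q1, p⁆⁆ = 0 := by rw [← lie_skew, h2.2 q2 hq2, neg_zero]
    rw [lie_lie, e1, e2, sub_zero]
  rw [LieSubmodule.lie_eq_bot_iff]
  intro x hx m hm
  rw [← lie_skew, hQP hm x hx, neg_zero]

end Aux

/-- Distinct quasi-minimal components commute: `E†(L)` is the sum of the quasi-minimal
components, and for distinct quasi-minimal components `P, Q` we have `[P,Q] = 0` and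
`P ∩ Q ⊆ Z(R)`. -/
theorem stmt_11 (F : Type*) [Field F] (L : Type*) [LieRing L] [LieAlgebra F L]
    [FiniteDimensional F L] :
    (Edagger F L : Set L) =
        ((sSup {A : LieIdeal F L | IsQuasiMinimal A} : LieIdeal F L) : Set L) ∧
      ∀ P Q : LieIdeal F L, IsQuasiMinimal P → IsQuasiMinimal Q → P ≠ Q →
        ⁅P, Q⁆ = (⊥ : LieIdeal F L) ∧
          P ⊓ Q ≤ idealCenter (LieAlgebra.radical F L) := by
  constructor
  · apply Set.Subset.antisymm
    · intro x hx
      have hE : Edagger F L ≤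
          LieIdeal.toLieSubalgebra F L (sSup {A : LieIdeal F L | IsQuasiMinimal A}) := by
        rw [Edagger, LieSubalgebra.lieSpan_le]
        intro y hy
        obtain ⟨A, hA, hyA⟩ := Set.mem_iUnion₂.mp hy
        exact le_sSup hA hyA
      exact hE hx
    · intro x hx
      have hx' : x ∈ sSup {(s : Submodule F L) | s ∈ {A : LieIdeal F L | IsQuasiMinimal A}} :=
        hx
      have hle : sSup {(s : Submodule F L) | s ∈ {A : LieIdeal F L | IsQuasiMinimal A}} ≤
          (Edagger F L).toSubmodule := by
        apply sSup_le
        rintro p ⟨A, hA, rfl⟩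
        intro y hy
        exact LieSubalgebra.subset_lieSpan (Set.mem_biUnion hA hy)
      exact hle hx'
  · intro P Q hP hQ hne
    refine ⟨qm_commute hP hQ hne, ?_⟩
    intro x hx
    have hx' : x ∈ P ∧ x ∈ Q := (LieSubmodule.mem_inf P Q x).mp hx
    have hxZ : x ∈ idealCenter P := inf_le_idealCenter hP hQ hne hx
    have hxR : x ∈ LieAlgebra.radical F L := by
      have h := (qm_center_eq hP) ▸ hxZ
      exact ((LieSubmodule.mem_inf P (LieAlgebra.radical F L) x).mp h).2
    exact ⟨hxR, fun y hy => qm_centralizes_radical hP x hx'.1 y hy⟩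


end Paper
end

section
/- Let L be a finite-dimensional Lie algebra over any field F, with nilradical N = N(L). Then N*(L) = N†(L). -/
namespace Paper

open LieAlgebra

section AuxProofs

variable {F : Type*} [Field F] {L : Type*} [LieRing L] [LieAlgebra F L]

lemma aux_mem_centralizer {I : LieIdeal F L} {x : L} :
    x ∈ centralizer I ↔ ∀ y ∈ I, ⁅x, y⁆ = 0 := Iff.rfl

lemma aux_mem_idealCenter {I : LieIdeal F L} {x : L} :
    x ∈ idealCenter I ↔ x ∈ I ∧ ∀ y ∈ I, ⁅x, y⁆ = 0 := Iff.rfl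

lemma aux_lie_le_of_forall {I J K : LieIdeal F L}
    (h : ∀ x ∈ I, ∀ y ∈ J, ⁅x, y⁆ ∈ K) : ⁅I, J⁆ ≤ K := by
  rw [← LieSubmodule.toSubmodule_le_toSubmodule,
    LieSubmodule.lieIdeal_oper_eq_linear_span', Submodule.span_le]
  rintro m ⟨x, hx, y, hy, rfl⟩
  exact h x hx y hy

/-- If triple brackets of elements of an ideal vanish, the ideal is nilpotent. -/
lemma aux_isNilpotent_of_triple (D : LieIdeal F L)
    (h : ∀ a ∈ D, ∀ b ∈ D, ∀ c ∈ D, ⁅a, ⁅b, c⁆⁆ = (0 : L)) :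
    LieModule.IsNilpotent D D := by
  rw [LieModule.isNilpotent_iff F]
  refine ⟨2, ?_⟩
  have h1 : ∀ m ∈ LieModule.lowerCentralSeries F D D 1, ∀ a : D, ⁅a, m⁆ = (0 : D) := by
    intro m hm a
    rw [LieModule.lowerCentralSeries_succ, LieModule.lowerCentralSeries_zero,
      ← LieSubmodule.mem_toSubmodule, LieSubmodule.lieIdeal_oper_eq_linear_span'] at hm
    refine Submodule.span_induction ?_ ?_ ?_ ?_ hm
    · rintro m'' ⟨x, -, y, -, rfl⟩
      ext
      have := h a a.2 (x : D) (x : D).2 (y : D) (y : D).2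
      simpa using this
    · simp
    · intro m₁ m₂ _ _ hm₁ hm₂; rw [lie_add, hm₁, hm₂, add_zero]
    · intro t m'' _ hm''; rw [lie_smul, hm'', smul_zero]
  show LieModule.lowerCentralSeries F D D 2 = ⊥
  rw [show (2 : ℕ) = 1 + 1 from rfl, LieModule.lowerCentralSeries_succ,
    LieSubmodule.lie_eq_bot_iff]
  intro x _ m hm
  exact h1 m hm x

lemma aux_abelian_le_nilrad (Z : LieIdeal F L)
    (h : ∀ x ∈ Z, ∀ y ∈ Z, ⁅x, y⁆ = (0 : L)) : Z ≤ nilrad F L :=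
  le_sSup (aux_isNilpotent_of_triple Z (fun a _ b hb c hc => by
    rw [h b hb c hc, lie_zero]))

/-- Claim 1: every quasi-minimal ideal is contained in `N*`. -/
lemma aux_quasiMin_le_Nstar (A : LieIdeal F L) (hA : IsQuasiMinimal A) :
    A ≤ Nstar F L := by
  obtain ⟨hAA, hZA, hmin⟩ := hA
  set N := nilrad F L with hN
  -- the centre of A is abelian, hence inside the nilradical
  have hZle : idealCenter A ≤ N :=
    aux_abelian_le_nilrad _ (fun x hx y hy => hx.2 y hy.1)
  have hZA' : idealCenter A ≤ A := fun x hx => hx.1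
  have hcase := hmin (A ⊓ N) (le_inf hZA' hZle) inf_le_left
  rcases hcase with hcase | hcase
  · -- A ⊓ N = Z(A) : show A centralises N and A ⊔ N is minimal mod N
    have hAC : A ≤ centralizer N := by
      have hle : ⁅A, A⁆ ≤ centralizer N := by
        refine aux_lie_le_of_forall ?_
        intro x hx y hy
        intro n hn
        have hyn : ⁅y, n⁆ ∈ idealCenter A := by
          rw [← hcase]
          exact ⟨lie_mem_left F L A y n hy, (N : LieSubmodule F L L).lie_mem hn⟩
        have hxn : ⁅x, n⁆ ∈ idealCenter A := by
          rw [← hcase]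
          exact ⟨lie_mem_left F L A x n hx, (N : LieSubmodule F L L).lie_mem hn⟩
        have h1 : ⁅x, ⁅y, n⁆⁆ = (0 : L) := by
          rw [← lie_skew, hyn.2 x hx, neg_zero]
        have h2 : ⁅y, ⁅x, n⁆⁆ = (0 : L) := by
          rw [← lie_skew, hxn.2 y hy, neg_zero]
        rw [lie_lie, h1, h2, sub_zero]
      rwa [hAA] at hle
    have hAnotN : ¬ A ≤ N := by
      intro hle
      have : A ⊓ N = A := inf_eq_left.mpr hle
      rw [hcase] at this
      exact hZA.ne this
    have hmem : (A ⊔ N) ∈ {B : LieIdeal F L | IsMinModIdeal N B ∧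
        B ≤ N ⊔ centralizer N} := by
      constructor
      · constructor
        · refine lt_of_le_of_ne le_sup_right ?_
          intro hEq
          exact hAnotN (le_sup_left.trans hEq.symm.le)
        · intro K hNK hKA
          have hZK : idealCenter A ≤ A ⊓ K :=
            le_inf hZA' (fun z hz => hNK (hZle hz))
          rcases hmin (A ⊓ K) hZK inf_le_left with hsub | hsub
          · left
            refine le_antisymm ?_ hNK
            intro x hx
            obtain ⟨a, ha, n, hn, rfl⟩ := (LieSubmodule.mem_sup _ _ _).mp (hKA hx)
            have haK : a ∈ K := by
              have : a + n - n ∈ K := K.sub_mem hx (hNK hn)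
              simpa using this
            have haZ : a ∈ idealCenter A := hsub ▸ (⟨ha, haK⟩ : a ∈ A ⊓ K)
            exact N.add_mem (hZle haZ) hn
          · right
            exact le_antisymm hKA (sup_le (inf_eq_left.mp hsub) hNK)
      · exact sup_le (hAC.trans le_sup_right) le_sup_left
    calc A ≤ A ⊔ N := le_sup_left
      _ ≤ sSup {B : LieIdeal F L | IsMinModIdeal N B ∧ B ≤ N ⊔ centralizer N} := le_sSup hmem
      _ ≤ Nstar F L := le_sup_right
  · -- A ⊓ N = A, i.e. A ≤ N
    have : A ≤ N := inf_eq_left.mp hcase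
    exact this.trans le_sup_left

/-- Claim 2: every minimal ideal mod `N` inside `N + C_L(N)` is contained in `N†`. -/
lemma aux_minMod_subset_Ndagger [FiniteDimensional F L] (A : LieIdeal F L)
    (hminA : IsMinModIdeal (nilrad F L) A)
    (hAle : A ≤ nilrad F L ⊔ centralizer (nilrad F L)) :
    (A : Set L) ⊆ (Ndagger F L : Set L) := by
  obtain ⟨hNA, hmin⟩ := hminA
  set N := nilrad F L with hN
  set C := centralizer (F := F) N with hC
  set D := A ⊓ C with hD
  have hDC : D ≤ C := inf_le_right
  have hDN0 : ∀ d ∈ D, ∀ n ∈ N, ⁅d, n⁆ = (0 : L) := fun d hd n hn => (hDC hd) n hn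
  have hA_eq : A = D ⊔ N := by
    apply le_antisymm
    · intro x hx
      obtain ⟨n, hn, c, hc, hx'⟩ := (LieSubmodule.mem_sup _ _ _).mp (hAle hx)
      have hcA : c ∈ A := by
        have : (n + c) - n ∈ A := A.sub_mem (hx' ▸ hx) (hNA.le hn)
        simpa using this
      have hcD : c ∈ D := (LieSubmodule.mem_inf _ _ _).mpr ⟨hcA, hc⟩
      exact (LieSubmodule.mem_sup _ _ _).mpr ⟨c, hcD, n, hn, by rw [add_comm]; exact hx'⟩
    · exact sup_le inf_le_left hNA.le
  have hAA : ⁅A, A⁆ ⊔ N = A := by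
    rcases hmin (⁅A, A⁆ ⊔ N) le_sup_right
        (sup_le (LieSubmodule.lie_le_left _ _) hNA.le) with hc | hc
    · exfalso
      have hAAN : ⁅A, A⁆ ≤ N := le_sup_left.trans hc.le
      have hDnil : LieModule.IsNilpotent D D := by
        apply aux_isNilpotent_of_triple
        intro a ha b hb c hc'
        have hDA : D ≤ A := inf_le_left
        have hbc : ⁅b, c⁆ ∈ N :=
          hAAN (LieSubmodule.lie_mem_lie (hDA hb) (hDA hc'))
        exact hDN0 a ha _ hbc
      have hDN : D ≤ N := le_sSup hDnil
      exact hNA.not_ge (hA_eq.le.trans (sup_le hDN le_rfl))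
    · exact hc
  have hder : ∀ k, derivedSeriesOfIdeal F L k D ⊔ N = A := by
    intro k
    induction k with
    | zero => rw [derivedSeriesOfIdeal_zero]; exact hA_eq.symm
    | succ k ih =>
      have hkA : derivedSeriesOfIdeal F L k D ≤ A := le_sup_left.trans ih.le
      have hk1A : derivedSeriesOfIdeal F L (k + 1) D ≤ A :=
        (derivedSeriesOfIdeal_succ_le D k).trans hkA
      rcases hmin _ le_sup_right (sup_le hk1A hNA.le) with hc | hc
      · exfalso
        have hsub : derivedSeriesOfIdeal F L (k + 1) D ≤ N := le_sup_left.trans hc.le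
        have hAAN : ⁅A, A⁆ ≤ N := by
          refine aux_lie_le_of_forall ?_
          intro x hx y hy
          rw [← ih] at hx hy
          obtain ⟨d, hd, n, hn, rfl⟩ := (LieSubmodule.mem_sup _ _ _).mp hx
          obtain ⟨e, he, m, hm, rfl⟩ := (LieSubmodule.mem_sup _ _ _).mp hy
          have hdD : d ∈ D := derivedSeriesOfIdeal_le_self D k hd
          have heD : e ∈ D := derivedSeriesOfIdeal_le_self D k he
          have h1 : ⁅d, e⁆ ∈ N := hsub (by
            rw [derivedSeriesOfIdeal_succ]
            exact LieSubmodule.lie_mem_lie hd he)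
          have h2 : ⁅d, m⁆ = (0 : L) := hDN0 d hdD m hm
          have h3 : ⁅n, e⁆ = (0 : L) := by
            rw [← lie_skew, hDN0 e heD n hn, neg_zero]
          have h4 : ⁅n, m⁆ ∈ N := (N : LieSubmodule F L L).lie_mem hm
          have : ⁅d + n, e + m⁆ = ⁅d, e⁆ + ⁅n, m⁆ := by
            rw [add_lie, lie_add, lie_add, h2, h3, add_zero, zero_add]
          rw [this]
          exact N.add_mem h1 h4
        exact hNA.not_ge (by rw [← hAA]; exact sup_le hAAN le_rfl)
      · exact hc
  obtain ⟨n0, hn0⟩ := IsArtinian.monotone_stabilizes (R := F) (M := L)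
    ⟨fun k => OrderDual.toDual (derivedSeriesOfIdeal F L k D : Submodule F L),
      fun k l hkl => (LieSubmodule.toSubmodule_le_toSubmodule _ _).mpr
        (derivedSeriesOfIdeal_antitone D hkl)⟩
  set E := derivedSeriesOfIdeal F L n0 D with hE
  have hE2 : ⁅E, E⁆ = E := by
    have h := hn0 (n0 + 1) (Nat.le_succ _)
    have h' : (derivedSeriesOfIdeal F L n0 D : Submodule F L) =
        (derivedSeriesOfIdeal F L (n0 + 1) D : Submodule F L) := h
    have h'' := (LieSubmodule.toSubmodule_inj _ _).mp h'
    rw [derivedSeriesOfIdeal_succ] at h''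
    exact h''.symm
  have hEN : E ⊔ N = A := hder n0
  have hED : E ≤ D := derivedSeriesOfIdeal_le_self D n0
  have hE_notN : ¬ E ≤ N := fun h => hNA.not_ge (by rw [← hEN]; exact sup_le h le_rfl)
  have hZeq : idealCenter E = E ⊓ N := by
    apply le_antisymm
    · exact le_inf (fun x hx => hx.1)
        (aux_abelian_le_nilrad _ (fun x hx y hy => hx.2 y hy.1))
    · intro x hx
      obtain ⟨hxE, hxN⟩ := (LieSubmodule.mem_inf _ _ _).mp hx
      refine ⟨hxE, fun y hy => ?_⟩
      rw [← lie_skew, hDN0 y (hED hy) x hxN, neg_zero]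
  have hquasi : IsQuasiMinimal E := by
    refine ⟨hE2, ?_, ?_⟩
    · refine lt_of_le_of_ne (fun x hx => hx.1) ?_
      intro hEq
      apply hE_notN
      intro x hx
      have hxZ : x ∈ idealCenter E := by rw [hEq]; exact hx
      rw [hZeq] at hxZ
      exact ((LieSubmodule.mem_inf _ _ _).mp hxZ).2
    · intro B hZB hBE
      rcases hmin (B ⊔ N) le_sup_right
          (sup_le (hBE.trans (le_sup_left.trans hEN.le)) hNA.le) with hc | hc
      · left
        refine le_antisymm ?_ hZB
        intro b hb
        have hbN : b ∈ N := (le_sup_left.trans hc.le) hb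
        rw [hZeq]
        exact (LieSubmodule.mem_inf _ _ _).mpr ⟨hBE hb, hbN⟩
      · right
        refine le_antisymm hBE ?_
        intro e he
        have heA : e ∈ B ⊔ N := hc.symm ▸ (le_sup_left.trans hEN.le) he
        obtain ⟨b, hbB, n, hn, hbe⟩ := (LieSubmodule.mem_sup _ _ _).mp heA
        have hnE : n ∈ E := by
          have : e - b ∈ E := E.sub_mem he (hBE hbB)
          have hn' : n = e - b := by rw [← hbe]; abel
          rwa [hn']
        have hnZ : n ∈ idealCenter E := by
          rw [hZeq]
          exact (LieSubmodule.mem_inf _ _ _).mpr ⟨hnE, hn⟩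
        have : e = b + n := hbe.symm
        rw [this]
        exact B.add_mem hbB (hZB hnZ)
  intro x hx
  have hx' : x ∈ E ⊔ N := hEN.symm ▸ (SetLike.mem_coe.mp hx)
  obtain ⟨e, he, n, hn, rfl⟩ := (LieSubmodule.mem_sup _ _ _).mp hx'
  have h1 : e ∈ Ndagger F L := by
    have heE : e ∈ Edagger F L := by
      apply LieSubalgebra.subset_lieSpan
      exact Set.mem_biUnion hquasi (SetLike.mem_coe.mpr he)
    exact (le_sup_right : Edagger F L ≤ Ndagger F L) heE
  have h2 : n ∈ Ndagger F L :=
    (le_sup_left : LieIdeal.toLieSubalgebra F L N ≤ Ndagger F L) hn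
  exact SetLike.mem_coe.mpr ((Ndagger F L).add_mem h1 h2)

end AuxProofs

/-- `N*(L) = N†(L)`. -/
theorem stmt_14 (F : Type*) [Field F] (L : Type*) [LieRing L] [LieAlgebra F L]
    [FiniteDimensional F L] :
    (Nstar F L : Set L) = (Ndagger F L : Set L) := by
  apply Set.Subset.antisymm
  · intro x hx
    have hx' : x ∈ nilrad F L ⊔ sSup {A : LieIdeal F L | IsMinModIdeal (nilrad F L) A ∧
        A ≤ nilrad F L ⊔ centralizer (nilrad F L)} := SetLike.mem_coe.mp hx
    obtain ⟨n, hn, s, hs, rfl⟩ := (LieSubmodule.mem_sup _ _ _).mp hx'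
    have h1 : n ∈ Ndagger F L :=
      (le_sup_left : LieIdeal.toLieSubalgebra F L (nilrad F L) ≤ Ndagger F L) hn
    have h2 : s ∈ Ndagger F L := by
      have hss : sSup {(A : Submodule F L) | A ∈ {A : LieIdeal F L |
          IsMinModIdeal (nilrad F L) A ∧
          A ≤ nilrad F L ⊔ centralizer (nilrad F L)}} ≤
          (Ndagger F L).toSubmodule := by
        apply sSup_le
        rintro p ⟨A, ⟨hA1, hA2⟩, rfl⟩
        intro y hy
        exact SetLike.mem_coe.mp
          (aux_minMod_subset_Ndagger A hA1 hA2 (SetLike.mem_coe.mpr hy))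
      have hs' : s ∈ sSup {(A : Submodule F L) | A ∈ {A : LieIdeal F L |
          IsMinModIdeal (nilrad F L) A ∧
          A ≤ nilrad F L ⊔ centralizer (nilrad F L)}} := hs
      exact hss hs'
    exact SetLike.mem_coe.mpr ((Ndagger F L).add_mem h1 h2)
  · intro x hx
    have hle : Ndagger F L ≤ LieIdeal.toLieSubalgebra F L (Nstar F L) := by
      apply sup_le
      · intro y hy
        exact (le_sup_left : nilrad F L ≤ Nstar F L) hy
      · rw [Edagger, LieSubalgebra.lieSpan_le]
        intro y hy
        simp only [Set.mem_iUnion, Set.mem_setOf_eq] at hy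
        obtain ⟨A, hA, hyA⟩ := hy
        exact aux_quasiMin_le_Nstar A hA hyA
    exact hle (SetLike.mem_coe.mp hx)

end Paper
end

section
/- Let L be a finite-dimensional Lie algebra over any field F and suppose L = I ⊕ J, where I and J are ideals of L. Then N†(L) = N†(I) ⊕ N†(J). -/
namespace Paper

open LieAlgebra

section DS

variable {F : Type*} [Field F] {L : Type*} [LieRing L] [LieAlgebra F L]
variable (I J : LieIdeal F L)

lemma commIJ (hinf : I ⊓ J = ⊥) {x y : L} (hx : x ∈ I) (hy : y ∈ J) : ⁅x, y⁆ = 0 := by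
  have h1 : ⁅x, y⁆ ∈ I := by
    rw [← lie_skew]; exact neg_mem (I.lie_mem hx)
  have h2 : ⁅x, y⁆ ∈ J := J.lie_mem hy
  have : ⁅x, y⁆ ∈ I ⊓ J := (LieSubmodule.mem_inf _ _ _).mpr ⟨h1, h2⟩
  rw [hinf] at this
  exact (LieSubmodule.mem_bot _).mp this

lemma isComplIJ (hsup : I ⊔ J = ⊤) (hinf : I ⊓ J = ⊥) :
    IsCompl (LieSubmodule.toSubmodule I) (LieSubmodule.toSubmodule J) := by
  constructor
  · rw [disjoint_iff, ← LieSubmodule.inf_toSubmodule, hinf, LieSubmodule.bot_toSubmodule]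
  · rw [codisjoint_iff, ← LieSubmodule.sup_toSubmodule, hsup, LieSubmodule.top_toSubmodule]

lemma exists_decomp (hsup : I ⊔ J = ⊤) (x : L) : ∃ y ∈ I, ∃ z ∈ J, y + z = x := by
  have hx : x ∈ I ⊔ J := by rw [hsup]; exact LieSubmodule.mem_top x
  exact (LieSubmodule.mem_sup _ _ _).mp hx

noncomputable def pI (hsup : I ⊔ J = ⊤) (hinf : I ⊓ J = ⊥) : L →ₗ[F] I :=
  Submodule.linearProjOfIsCompl _ _ (isComplIJ I J hsup hinf)

variable (hsup : I ⊔ J = ⊤) (hinf : I ⊓ J = ⊥)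

lemma pI_of_mem {x : L} (hx : x ∈ I) : (pI I J hsup hinf x : L) = x :=
  congrArg Subtype.val
    (Submodule.linearProjOfIsCompl_apply_left (isComplIJ I J hsup hinf) ⟨x, hx⟩)

lemma pI_of_memJ {x : L} (hx : x ∈ J) : pI I J hsup hinf x = 0 :=
  Submodule.projectionOnto_apply_of_mem_right (isComplIJ I J hsup hinf) hx

lemma pI_lie (x y : L) :
    (pI I J hsup hinf ⁅x, y⁆ : L) = ⁅(pI I J hsup hinf x : L), (pI I J hsup hinf y : L)⁆ := by
  obtain ⟨a, ha, b, hb, hx⟩ := exists_decomp I J hsup x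
  obtain ⟨c, hc, d, hd, hy⟩ := exists_decomp I J hsup y
  have hbc : ⁅b, c⁆ = 0 := by rw [← lie_skew, commIJ I J hinf hc hb, neg_zero]
  have had : ⁅a, d⁆ = 0 := commIJ I J hinf ha hd
  have hxy : ⁅x, y⁆ = ⁅a, c⁆ + ⁅b, d⁆ := by
    rw [← hx, ← hy, add_lie, lie_add, lie_add, had, hbc, add_zero, zero_add]
  have hx1 : (pI I J hsup hinf x : L) = a := by
    rw [← hx, map_add]
    simp [pI_of_mem I J hsup hinf ha, pI_of_memJ I J hsup hinf hb]
  have hy1 : (pI I J hsup hinf y : L) = c := by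
    rw [← hy, map_add]
    simp [pI_of_mem I J hsup hinf hc, pI_of_memJ I J hsup hinf hd]
  have hac : ⁅a, c⁆ ∈ I := I.lie_mem hc
  have hbd : ⁅b, d⁆ ∈ J := J.lie_mem hd
  rw [hxy, map_add, hx1, hy1]
  simp [pI_of_mem I J hsup hinf hac, pI_of_memJ I J hsup hinf hbd]

/-- Lift of an ideal of `I` to an ideal of `L`. -/
def liftIdeal (K : LieIdeal F I) : LieIdeal F L where
  carrier := {x : L | ∃ a ∈ K, (a : L) = x}
  zero_mem' := ⟨0, K.zero_mem, rfl⟩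
  add_mem' := by rintro x y ⟨a, ha, rfl⟩ ⟨b, hb, rfl⟩; exact ⟨a + b, K.add_mem ha hb, rfl⟩
  smul_mem' := by rintro c x ⟨a, ha, rfl⟩; exact ⟨c • a, K.smul_mem c ha, rfl⟩
  lie_mem := by
    rintro x m ⟨a, ha, rfl⟩
    obtain ⟨y, hy, z, hz, hx⟩ := exists_decomp I J hsup x
    have hz0 : ⁅z, (a : L)⁆ = 0 := by
      rw [← lie_skew, commIJ I J hinf a.2 hz, neg_zero]
    refine ⟨⁅(⟨y, hy⟩ : I), a⁆, K.lie_mem ha, ?_⟩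
    show ⁅y, (a : L)⁆ = ⁅x, (a : L)⁆
    rw [← hx, add_lie, hz0, add_zero]

lemma mem_liftIdeal_coe {K : LieIdeal F I} {a : I} (ha : a ∈ K) :
    (a : L) ∈ liftIdeal I J hsup hinf K := ⟨a, ha, rfl⟩

lemma liftIdeal_le (K : LieIdeal F I) : liftIdeal I J hsup hinf K ≤ I := by
  rintro x ⟨a, _, rfl⟩; exact a.2

/-- Restriction of an ideal of `L` to an ideal of `I`. -/
def resIdeal (A : LieIdeal F L) : LieIdeal F I where
  carrier := {a : I | (a : L) ∈ A}
  zero_mem' := A.zero_mem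
  add_mem' := by intro a b ha hb; exact A.add_mem ha hb
  smul_mem' := by intro c a ha; exact A.smul_mem c ha
  lie_mem := by
    intro x a ha
    show (↑⁅x, a⁆ : L) ∈ A
    exact A.lie_mem ha

lemma mem_resIdeal {A : LieIdeal F L} {a : I} : a ∈ resIdeal I A ↔ (a : L) ∈ A := Iff.rfl

lemma lift_res {A : LieIdeal F L} (hA : A ≤ I) : liftIdeal I J hsup hinf (resIdeal I A) = A := by
  ext x
  constructor
  · rintro ⟨a, ha, rfl⟩; exact ha
  · intro hx; exact ⟨⟨x, hA hx⟩, hx, rfl⟩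

lemma res_lift (K : LieIdeal F I) : resIdeal I (liftIdeal I J hsup hinf K) = K := by
  ext a
  constructor
  · rintro ⟨b, hb, hba⟩
    rwa [show b = a from Subtype.ext hba] at hb
  · intro ha; exact ⟨a, ha, rfl⟩

lemma lift_le_iff {K K' : LieIdeal F I} :
    liftIdeal I J hsup hinf K ≤ liftIdeal I J hsup hinf K' ↔ K ≤ K' := by
  constructor
  · intro h a ha
    obtain ⟨b, hb, hba⟩ := h (mem_liftIdeal_coe I J hsup hinf ha)
    rwa [show b = a from Subtype.ext hba] at hb
  · rintro h x ⟨a, ha, rfl⟩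
    exact ⟨a, h ha, rfl⟩

lemma lift_inj {K K' : LieIdeal F I}
    (h : liftIdeal I J hsup hinf K = liftIdeal I J hsup hinf K') : K = K' := by
  rw [← res_lift I J hsup hinf K, ← res_lift I J hsup hinf K', h]

/-- The natural surjection from `K` onto its lift. -/
def liftHom (K : LieIdeal F I) : K →ₗ⁅F⁆ liftIdeal I J hsup hinf K where
  toFun a := ⟨(a.1 : L), a.1, a.2, rfl⟩
  map_add' a b := rfl
  map_smul' c a := rfl
  map_lie' := rfl

lemma liftHom_surjective (K : LieIdeal F I) : Function.Surjective (liftHom I J hsup hinf K) := by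
  rintro ⟨x, a, ha, rfl⟩
  exact ⟨⟨a, ha⟩, rfl⟩

lemma isNilpotent_lift {K : LieIdeal F I} (h : LieModule.IsNilpotent K K) :
    LieModule.IsNilpotent (liftIdeal I J hsup hinf K) (liftIdeal I J hsup hinf K) := by
  haveI := h
  exact Function.Surjective.lieAlgebra_isNilpotent (liftHom_surjective I J hsup hinf K)

/-- Projection of an ideal of `L` to an ideal of `I`. -/
def projIdeal (K : LieIdeal F L) : LieIdeal F I where
  carrier := {a : I | ∃ x ∈ K, pI I J hsup hinf x = a}
  zero_mem' := ⟨0, K.zero_mem, map_zero _⟩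
  add_mem' := by
    rintro a b ⟨x, hx, rfl⟩ ⟨y, hy, rfl⟩
    exact ⟨x + y, K.add_mem hx hy, map_add _ _ _⟩
  smul_mem' := by
    rintro c a ⟨x, hx, rfl⟩
    exact ⟨c • x, K.smul_mem c hx, map_smul _ _ _⟩
  lie_mem := by
    rintro b a ⟨x, hx, rfl⟩
    refine ⟨⁅(b : L), x⁆, K.lie_mem hx, ?_⟩
    apply Subtype.ext
    show (pI I J hsup hinf ⁅(b : L), x⁆ : L) = (↑⁅b, pI I J hsup hinf x⁆ : L)
    rw [pI_lie I J hsup hinf, pI_of_mem I J hsup hinf b.2]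
    rfl

/-- The natural surjection from `K` onto its projection to `I`. -/
noncomputable def projHom (K : LieIdeal F L) : K →ₗ⁅F⁆ projIdeal I J hsup hinf K where
  toFun x := ⟨pI I J hsup hinf x.1, x.1, x.2, rfl⟩
  map_add' x y := by
    apply Subtype.ext; apply Subtype.ext
    show (pI I J hsup hinf ((x : L) + (y : L)) : L) = _
    rw [map_add]; rfl
  map_smul' c x := by
    apply Subtype.ext; apply Subtype.ext
    show (pI I J hsup hinf (c • (x : L)) : L) = _
    rw [map_smul]; rfl
  map_lie' {x y} := by
    apply Subtype.ext; apply Subtype.ext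
    show (pI I J hsup hinf ⁅(x : L), (y : L)⁆ : L) = _
    rw [pI_lie I J hsup hinf]
    rfl

lemma projHom_surjective (K : LieIdeal F L) :
    Function.Surjective (projHom I J hsup hinf K) := by
  rintro ⟨a, x, hx, rfl⟩
  exact ⟨⟨x, hx⟩, Subtype.ext rfl⟩

lemma isNilpotent_proj {K : LieIdeal F L} (h : LieModule.IsNilpotent K K) :
    LieModule.IsNilpotent (projIdeal I J hsup hinf K) (projIdeal I J hsup hinf K) := by
  haveI := h
  exact Function.Surjective.lieAlgebra_isNilpotent (projHom_surjective I J hsup hinf K)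

lemma mem_nilrad_of {K : LieIdeal F L} (hK : LieModule.IsNilpotent K K) {x : L} (hx : x ∈ K) :
    x ∈ nilrad F L :=
  le_sSup (show K ∈ {I : LieIdeal F L | LieModule.IsNilpotent I I} from hK) hx

include hsup hinf in
lemma coe_mem_nilrad {a : I} (ha : a ∈ nilrad F I) : (a : L) ∈ nilrad F L := by
  rw [nilrad, sSup_eq_iSup'] at ha
  refine LieSubmodule.iSup_induction _ ha (motive := fun (b : I) => ((b : L) ∈ nilrad F L)) ?_ ?_ ?_
  · rintro ⟨K, hK⟩ y hy
    exact mem_nilrad_of (isNilpotent_lift I J hsup hinf hK) (mem_liftIdeal_coe I J hsup hinf hy)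
  · simpa using (nilrad F L).zero_mem
  · intro y z hy hz
    have := (nilrad F L).add_mem hy hz
    simpa using this

include hsup hinf in
lemma nilrad_decomp (hsup' : J ⊔ I = ⊤) (hinf' : J ⊓ I = ⊥) {x : L} (hx : x ∈ nilrad F L) :
    ∃ y ∈ nilrad F I, ∃ z ∈ nilrad F J, (y : L) + (z : L) = x := by
  rw [nilrad, sSup_eq_iSup'] at hx
  refine LieSubmodule.iSup_induction _ hx
    (motive := fun x => ∃ y ∈ nilrad F I, ∃ z ∈ nilrad F J, (y : L) + (z : L) = x) ?_ ?_ ?_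
  · rintro ⟨K, hK⟩ x hxK
    refine ⟨pI I J hsup hinf x, ?_, pI J I hsup' hinf' x, ?_, ?_⟩
    · exact mem_nilrad_of (isNilpotent_proj I J hsup hinf hK) ⟨x, hxK, rfl⟩
    · exact mem_nilrad_of (isNilpotent_proj J I hsup' hinf' hK) ⟨x, hxK, rfl⟩
    · -- decomposition identity
      have h1 : x - (pI I J hsup hinf x : L) ∈ J := by
        rw [← LieSubmodule.mem_toSubmodule,
          ← Submodule.projectionOnto_apply_eq_zero_iff (isComplIJ I J hsup hinf)]
        show pI I J hsup hinf (x - (pI I J hsup hinf x : L)) = 0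
        have : pI I J hsup hinf (pI I J hsup hinf x : L) = pI I J hsup hinf x :=
          Submodule.projectionOnto_apply_left (isComplIJ I J hsup hinf) _
        rw [map_sub, this, sub_self]
      have h2 : (pI J I hsup' hinf' x : L) = x - (pI I J hsup hinf x : L) := by
        have e : (pI I J hsup hinf x : L) + (x - (pI I J hsup hinf x : L)) = x := by abel
        have h3 : (pI J I hsup' hinf' x : L) = ↑(pI J I hsup' hinf'
            ((pI I J hsup hinf x : L) + (x - (pI I J hsup hinf x : L)))) :=
          congrArg (fun t => (pI J I hsup' hinf' t : L)) e.symm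
        rw [h3, map_add, Submodule.coe_add,
          pI_of_memJ J I hsup' hinf' (pI I J hsup hinf x).2,
          pI_of_mem J I hsup' hinf' h1, ZeroMemClass.coe_zero, zero_add]
      rw [h2]; abel
  · exact ⟨0, (nilrad F I).zero_mem, 0, (nilrad F J).zero_mem, by simp⟩
  · rintro u v ⟨y, hy, z, hz, rfl⟩ ⟨y', hy', z', hz', rfl⟩
    refine ⟨y + y', (nilrad F I).add_mem hy hy', z + z', (nilrad F J).add_mem hz hz', ?_⟩
    push_cast
    abel

lemma lift_lie (K : LieIdeal F I) :
    ⁅liftIdeal I J hsup hinf K, liftIdeal I J hsup hinf K⁆ = liftIdeal I J hsup hinf ⁅K, K⁆ := by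
  apply le_antisymm
  · rw [LieSubmodule.lie_le_iff]
    rintro x ⟨a, ha, rfl⟩ m ⟨b, hb, rfl⟩
    exact ⟨⁅a, b⁆, LieSubmodule.lie_mem_lie ha hb, rfl⟩
  · rintro x ⟨c, hc, rfl⟩
    have hc' : c ∈ LieSubmodule.toSubmodule ⁅K, K⁆ := hc
    rw [LieSubmodule.lieIdeal_oper_eq_linear_span'] at hc'
    refine Submodule.span_induction ?_ ?_ ?_ ?_ hc'
    · rintro m ⟨a, ha, b, hb, rfl⟩
      exact LieSubmodule.lie_mem_lie (mem_liftIdeal_coe I J hsup hinf ha)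
        (mem_liftIdeal_coe I J hsup hinf hb)
    · simpa using (⁅liftIdeal I J hsup hinf K, liftIdeal I J hsup hinf K⁆ :
        LieIdeal F L).zero_mem
    · intro u v _ _ hu hv
      have := add_mem hu hv
      simpa using this
    · intro r u _ hu
      have := SMulMemClass.smul_mem r hu
      simpa using this

lemma lift_center (K : LieIdeal F I) :
    idealCenter (liftIdeal I J hsup hinf K) = liftIdeal I J hsup hinf (idealCenter K) := by
  ext x
  constructor
  · rintro ⟨⟨a, ha, rfl⟩, hcen⟩
    exact ⟨a, ⟨ha, fun b hb => Subtype.ext (hcen (b : L) ⟨b, hb, rfl⟩)⟩, rfl⟩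
  · rintro ⟨a, ⟨haK, hacen⟩, rfl⟩
    refine ⟨⟨a, haK, rfl⟩, ?_⟩
    rintro y ⟨b, hb, rfl⟩
    exact congrArg Subtype.val (hacen b hb)

lemma res_mono {A A' : LieIdeal F L} (h : A ≤ A') : resIdeal I A ≤ resIdeal I A' :=
  fun _ ha => h ha

lemma lift_lt_iff {K K' : LieIdeal F I} :
    liftIdeal I J hsup hinf K < liftIdeal I J hsup hinf K' ↔ K < K' := by
  rw [lt_iff_le_not_ge, lt_iff_le_not_ge, lift_le_iff, lift_le_iff]

lemma lift_minmod_iff (Z K : LieIdeal F I) :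
    IsMinModIdeal (liftIdeal I J hsup hinf Z) (liftIdeal I J hsup hinf K) ↔
      IsMinModIdeal Z K := by
  constructor
  · rintro ⟨hlt, hmin⟩
    refine ⟨(lift_lt_iff I J hsup hinf).mp hlt, ?_⟩
    intro B hZB hBK
    rcases hmin (liftIdeal I J hsup hinf B) ((lift_le_iff I J hsup hinf).mpr hZB)
      ((lift_le_iff I J hsup hinf).mpr hBK) with h | h
    · exact Or.inl (lift_inj I J hsup hinf h)
    · exact Or.inr (lift_inj I J hsup hinf h)
  · rintro ⟨hlt, hmin⟩
    refine ⟨(lift_lt_iff I J hsup hinf).mpr hlt, ?_⟩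
    intro B hZB hBK
    have hBI : B ≤ I := le_trans hBK (liftIdeal_le I J hsup hinf K)
    have hB : liftIdeal I J hsup hinf (resIdeal I B) = B := lift_res I J hsup hinf hBI
    have h1 : Z ≤ resIdeal I B := by
      rw [← res_lift I J hsup hinf Z]; exact res_mono I (hZB)
    have h2 : resIdeal I B ≤ K := by
      rw [← res_lift I J hsup hinf K]; exact res_mono I (hBK)
    rcases hmin (resIdeal I B) h1 h2 with h | h
    · left; rw [← hB, h]
    · right; rw [← hB, h]

lemma lift_qm_iff (K : LieIdeal F I) :
    IsQuasiMinimal (liftIdeal I J hsup hinf K) ↔ IsQuasiMinimal K := by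
  unfold IsQuasiMinimal
  rw [lift_lie I J hsup hinf, lift_center I J hsup hinf, lift_minmod_iff I J hsup hinf]
  constructor
  · rintro ⟨h1, h2⟩; exact ⟨lift_inj I J hsup hinf h1, h2⟩
  · rintro ⟨h1, h2⟩; exact ⟨by rw [h1], h2⟩

lemma le_of_center_sup (A : LieIdeal F L) (hq : ⁅A, A⁆ = A)
    (h : idealCenter A ⊔ (A ⊓ I) = A) : A ≤ I := by
  have hle : ⁅A, A⁆ ≤ A ⊓ I := by
    rw [LieSubmodule.lie_le_iff]
    intro x hx m hm
    rw [← h] at hx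
    obtain ⟨z, hz, w, hw, rfl⟩ := (LieSubmodule.mem_sup _ _ _).mp hx
    have hz2 : ∀ y ∈ A, ⁅z, y⁆ = 0 := hz.2
    rw [add_lie, hz2 m hm, zero_add]
    refine (LieSubmodule.mem_inf _ _ _).mpr ⟨A.lie_mem hm, ?_⟩
    have hwI : w ∈ I := ((LieSubmodule.mem_inf _ _ _).mp hw).2
    rw [← lie_skew]
    exact neg_mem (I.lie_mem hwI)
  intro x hx
  rw [← hq] at hx
  exact ((LieSubmodule.mem_inf _ _ _).mp (hle hx)).2

include hsup in
lemma qm_le_or (A : LieIdeal F L) (hA : IsQuasiMinimal A) : A ≤ I ∨ A ≤ J := by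
  have hZA : idealCenter A ≤ A := fun x hx => hx.1
  rcases hA.2.2 (idealCenter A ⊔ (A ⊓ I)) le_sup_left (sup_le hZA inf_le_left) with h1 | h1
  · rcases hA.2.2 (idealCenter A ⊔ (A ⊓ J)) le_sup_left (sup_le hZA inf_le_left) with h2 | h2
    · exfalso
      have hAA : ⁅A, A⁆ ≤ idealCenter A := by
        rw [LieSubmodule.lie_le_iff]
        intro x hx m hm
        obtain ⟨y, hy, z, hz, rfl⟩ := exists_decomp I J hsup m
        have t1 : ⁅x, y⁆ ∈ idealCenter A := by
          rw [← h1]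
          refine (le_sup_right :
            A ⊓ I ≤ idealCenter A ⊔ (A ⊓ I)) ((LieSubmodule.mem_inf _ _ _).mpr ⟨?_, I.lie_mem hy⟩)
          rw [← lie_skew]; exact neg_mem (A.lie_mem hx)
        have t2 : ⁅x, z⁆ ∈ idealCenter A := by
          rw [← h2]
          refine (le_sup_right :
            A ⊓ J ≤ idealCenter A ⊔ (A ⊓ J)) ((LieSubmodule.mem_inf _ _ _).mpr ⟨?_, J.lie_mem hz⟩)
          rw [← lie_skew]; exact neg_mem (A.lie_mem hx)
        rw [lie_add]
        exact (idealCenter A).add_mem t1 t2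
      exact hA.2.1.not_ge ((le_of_eq hA.1.symm).trans hAA)
    · right; exact le_of_center_sup J A hA.1 h2
  · left; exact le_of_center_sup I A hA.1 h1

include hsup hinf in
lemma coe_mem_Ndagger {a : I} (ha : a ∈ Ndagger F I) : (a : L) ∈ Ndagger F L := by
  suffices h : Ndagger F I ≤ LieSubalgebra.comap (LieIdeal.incl I) (Ndagger F L) by
    exact h ha
  apply sup_le
  · intro b hb
    show LieIdeal.incl I b ∈ Ndagger F L
    have hb' : (b : L) ∈ nilrad F L := coe_mem_nilrad I J hsup hinf hb
    exact (le_sup_left : LieIdeal.toLieSubalgebra F L (nilrad F L) ≤ Ndagger F L) hb'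
  · rw [Edagger, LieSubalgebra.lieSpan_le]
    intro b hb
    obtain ⟨K, hKqm, hbK⟩ := Set.mem_iUnion₂.mp hb
    show LieIdeal.incl I b ∈ Ndagger F L
    refine (le_sup_right : Edagger F L ≤ Ndagger F L) ?_
    exact LieSubalgebra.subset_lieSpan (Set.mem_biUnion
      (show liftIdeal I J hsup hinf K ∈ {A : LieIdeal F L | IsQuasiMinimal A} from
        (lift_qm_iff I J hsup hinf K).mpr hKqm)
      (mem_liftIdeal_coe I J hsup hinf hbK))

/-- The sum of `N†(I)` and `N†(J)` as a Lie subalgebra of `L`. -/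
def sumSub (hinf : I ⊓ J = ⊥) : LieSubalgebra F L where
  carrier := {x : L | ∃ y ∈ Ndagger F I, ∃ z ∈ Ndagger F J, x = (y : L) + (z : L)}
  zero_mem' := ⟨0, zero_mem _, 0, zero_mem _, by simp⟩
  add_mem' := by
    rintro x x' ⟨y, hy, z, hz, rfl⟩ ⟨y', hy', z', hz', rfl⟩
    refine ⟨y + y', add_mem hy hy', z + z', add_mem hz hz', ?_⟩
    push_cast
    abel
  smul_mem' := by
    rintro c x ⟨y, hy, z, hz, rfl⟩
    refine ⟨c • y, (Ndagger F I).smul_mem c hy, c • z, (Ndagger F J).smul_mem c hz, ?_⟩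
    push_cast
    rw [smul_add]
  lie_mem' := by
    rintro x x' ⟨y, hy, z, hz, rfl⟩ ⟨y', hy', z', hz', rfl⟩
    refine ⟨⁅y, y'⁆, (Ndagger F I).lie_mem hy hy', ⁅z, z'⁆, (Ndagger F J).lie_mem hz hz', ?_⟩
    have c1 : ⁅(y : L), (z' : L)⁆ = 0 := commIJ I J hinf y.2 z'.2
    have c2 : ⁅(z : L), (y' : L)⁆ = 0 := by
      rw [← lie_skew, commIJ I J hinf y'.2 z.2, neg_zero]
    show ⁅(y : L) + (z : L), (y' : L) + (z' : L)⁆ = ((⁅y, y'⁆ : I) : L) + ((⁅z, z'⁆ : J) : L)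
    rw [add_lie, lie_add, lie_add, c1, c2, add_zero, zero_add]
    rfl

end DS



/-- If `L = I ⊕ J` is a direct sum of ideals then `N†(L) = N†(I) ⊕ N†(J)`. -/
theorem stmt_15 (F : Type*) [Field F] (L : Type*) [LieRing L] [LieAlgebra F L]
    [FiniteDimensional F L] (I J : LieIdeal F L)
    (hsup : I ⊔ J = ⊤) (hinf : I ⊓ J = ⊥) :
    (Ndagger F L : Set L) =
      {x : L | ∃ y ∈ Ndagger F I, ∃ z ∈ Ndagger F J, x = (y : L) + (z : L)} := by
  have hsup' : J ⊔ I = ⊤ := by rwa [sup_comm]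
  have hinf' : J ⊓ I = ⊥ := by rwa [inf_comm]
  have key : Ndagger F L ≤ sumSub I J hinf := by
    apply sup_le
    · intro x hx
      obtain ⟨y, hy, z, hz, hyz⟩ := nilrad_decomp I J hsup hinf hsup' hinf' hx
      exact ⟨y, (le_sup_left : LieIdeal.toLieSubalgebra F I (nilrad F I) ≤ Ndagger F I) hy,
        z, (le_sup_left : LieIdeal.toLieSubalgebra F J (nilrad F J) ≤ Ndagger F J) hz, hyz.symm⟩
    · rw [Edagger, LieSubalgebra.lieSpan_le]
      intro x hx
      obtain ⟨A, hAqm, hxA⟩ := Set.mem_iUnion₂.mp hx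
      rcases qm_le_or I J hsup A hAqm with hAI | hAJ
      · have hres : IsQuasiMinimal (resIdeal I A) := by
          rw [← lift_qm_iff I J hsup hinf, lift_res I J hsup hinf hAI]; exact hAqm
        refine ⟨⟨x, hAI hxA⟩, ?_, 0, zero_mem _, by simp⟩
        exact (le_sup_right : Edagger F I ≤ Ndagger F I)
          (LieSubalgebra.subset_lieSpan (Set.mem_biUnion hres
            (show (⟨x, hAI hxA⟩ : I) ∈ resIdeal I A from hxA)))
      · have hres : IsQuasiMinimal (resIdeal J A) := by
          rw [← lift_qm_iff J I hsup' hinf', lift_res J I hsup' hinf' hAJ]; exact hAqm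
        refine ⟨0, zero_mem _, ⟨x, hAJ hxA⟩, ?_, by simp⟩
        exact (le_sup_right : Edagger F J ≤ Ndagger F J)
          (LieSubalgebra.subset_lieSpan (Set.mem_biUnion hres
            (show (⟨x, hAJ hxA⟩ : J) ∈ resIdeal J A from hxA)))
  ext x
  constructor
  · intro hx
    exact key hx
  · rintro ⟨y, hy, z, hz, rfl⟩
    exact (Ndagger F L).add_mem (coe_mem_Ndagger I J hsup hinf hy)
      (coe_mem_Ndagger J I hsup' hinf' hz)


end Paper
end
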